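/- Let E and F be vector lattices. If F is b-Dedekind complete, then a linear operator T : E → F is order bounded if and only if it is b-order bounded, i.e. L_b(E,F) = L_{b~}(E,F). -/

import Mathlib

open Set

noncomputable section

/-- A subset of a type with an order is order bounded. -/
def OrdBdd {V : Type*} [LE V] (S : Set V) : Prop :=
  ∃ a b : V, ∀ x ∈ S, a ≤ x ∧ x ≤ b

variable (V : Type*) [AddCommGroup V] [Module ℝ V] [Preorder V]

/-- The order dual `V^~` of an ordered vector space `V`: the submodule of those linear
functionals mapping order bounded sets to (order) bounded sets. -/
def obDual : Submodule ℝ (V →ₗ[ℝ] ℝ) where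
  carrier := {f | ∀ S : Set V, OrdBdd S → OrdBdd (f '' S)}
  zero_mem' := by
    intro S _
    exact ⟨0, 0, by rintro _ ⟨x, hx, rfl⟩; simp⟩
  add_mem' := by
    intro f g hf hg S hS
    obtain ⟨a, b, hab⟩ := hf S hS
    obtain ⟨c, d, hcd⟩ := hg S hS
    refine ⟨a + c, b + d, ?_⟩
    rintro _ ⟨x, hx, rfl⟩
    have h1 := hab (f x) ⟨x, hx, rfl⟩
    have h2 := hcd (g x) ⟨x, hx, rfl⟩
    simp only [LinearMap.add_apply]
    constructor <;> linarith [h1.1, h1.2, h2.1, h2.2]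
  smul_mem' := by
    intro c f hf S hS
    obtain ⟨a, b, hab⟩ := hf S hS
    refine ⟨-(|c| * max |a| |b|), |c| * max |a| |b|, ?_⟩
    rintro _ ⟨x, hx, rfl⟩
    obtain ⟨h1a, h1b⟩ := hab (f x) ⟨x, hx, rfl⟩
    have hfx : |f x| ≤ max |a| |b| := by
      refine abs_le.2 ⟨?_, ?_⟩
      · have h := neg_abs_le a
        have h' := le_max_left |a| |b|
        linarith
      · have h := le_abs_self b
        have h' := le_max_right |a| |b|
        linarith
    have habs : |(c • f) x| ≤ |c| * max |a| |b| := by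
      simp only [LinearMap.smul_apply, smul_eq_mul, abs_mul]
      exact mul_le_mul_of_nonneg_left hfx (abs_nonneg c)
    exact abs_le.1 habs

/-- The order on the order dual: `f ≤ g` iff `f x ≤ g x` for every `0 ≤ x`. -/
instance obDualPreorder : Preorder ↥(obDual V) where
  le f g := ∀ x : V, 0 ≤ x → (f : V →ₗ[ℝ] ℝ) x ≤ (g : V →ₗ[ℝ] ℝ) x
  le_refl f x _ := le_rfl
  le_trans f g h h1 h2 x hx := (h1 x hx).trans (h2 x hx)

/-- The order bidual `V^~~` of `V`. -/
abbrev Bidual := ↥(obDual ↥(obDual V))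

instance bidualPreorder : Preorder (Bidual V) := obDualPreorder ↥(obDual V)

variable {V}

/-- Evaluation at `x` as a linear functional on the order dual. -/
def evalMap (x : V) : ↥(obDual V) →ₗ[ℝ] ℝ where
  toFun f := (f : V →ₗ[ℝ] ℝ) x
  map_add' f g := by simp
  map_smul' c f := by simp

variable (E : Type*) [AddCommGroup E] [Module ℝ E] [Lattice E]
  [CovariantClass E E (· + ·) (· ≤ ·)]

/-- The canonical evaluation map `Q_E : E → E^~~`. -/
def QE (x : E) : Bidual E :=
  ⟨evalMap x, by
    intro S hS
    obtain ⟨φ, ψ, h⟩ := hS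
    refine ⟨(φ : E →ₗ[ℝ] ℝ) (x ⊔ 0) - (ψ : E →ₗ[ℝ] ℝ) (-x ⊔ 0),
            (ψ : E →ₗ[ℝ] ℝ) (x ⊔ 0) - (φ : E →ₗ[ℝ] ℝ) (-x ⊔ 0), ?_⟩
    rintro _ ⟨f, hf, rfl⟩
    obtain ⟨hφf, hfψ⟩ := h f hf
    have hx1 : (0 : E) ≤ x ⊔ 0 := le_sup_right
    have hx2 : (0 : E) ≤ -x ⊔ 0 := le_sup_right
    have hdecomp : (f : E →ₗ[ℝ] ℝ) x
        = (f : E →ₗ[ℝ] ℝ) (x ⊔ 0) - (f : E →ₗ[ℝ] ℝ) (-x ⊔ 0) := by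
      rw [← map_sub]
      congr 1
      have := posPart_sub_negPart x
      simpa [posPart, negPart] using this.symm
    have h1 := hφf _ hx1
    have h2 := hfψ _ hx1
    have h3 := hφf _ hx2
    have h4 := hfψ _ hx2
    have hev : evalMap x f = (f : E →ₗ[ℝ] ℝ) x := rfl
    rw [hev, hdecomp]
    exact ⟨by linarith, by linarith⟩⟩

/-- `A ⊆ E` is `b`-order bounded: its canonical image in `E^~~` is order bounded. -/
def BOrdBddSet (A : Set E) : Prop := OrdBdd (QE E '' A)

/-- `Q_E` is an (injective) lattice embedding of `E` into `E^~~`. -/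
def QLatticeEmbedding : Prop :=
  Function.Injective (QE E) ∧ (∀ x y : E, x ≤ y ↔ QE E x ≤ QE E y) ∧
    ∀ x y : E, IsLUB {QE E x, QE E y} (QE E (x ⊔ y))

/-- `E` is `b`-Dedekind complete: every nonempty subset of `E` bounded above by an element
of `E^~~` has a supremum in `E`. -/
def BDedekindComplete : Prop :=
  ∀ S : Set E, S.Nonempty → (∃ φ : Bidual E, ∀ a ∈ S, QE E a ≤ φ) → ∃ s : E, IsLUB S s

variable {E}

/-- The net `x` in `E` is `b`-order convergent to `a`: some net in `E^~~` with the same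
index set decreases to `0` in `E^~~` and dominates `|x i - a|` (canonically embedded). -/
def BOConv {ι : Type*} [Preorder ι] (x : ι → E) (a : E) : Prop :=
  ∃ y : ι → Bidual E, Antitone y ∧ IsGLB (Set.range y) 0 ∧ ∀ i, QE E (|x i - a|) ≤ y i

/-- `x_α ↓_b 0` : the net `x` is decreasing and `inf_α x_α = 0` holds in `E^~~`. -/
def DownB0 {ι : Type*} [Preorder ι] (x : ι → E) : Prop :=
  Antitone x ∧ IsGLB (Set.range fun i => QE E (x i)) 0

section Operators

variable {G : Type*} [AddCommGroup G] [Module ℝ G] [Lattice G]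
  [CovariantClass G G (· + ·) (· ≤ ·)]

/-- `T` is an order bounded operator. -/
def OrderBddOp (T : E →ₗ[ℝ] G) : Prop := ∀ A : Set E, OrdBdd A → OrdBdd (T '' A)

/-- `T` is a `b`-order bounded operator: it maps `b`-order bounded sets to
`b`-order bounded sets. -/
def BOrdBddOp (T : E →ₗ[ℝ] G) : Prop := ∀ A : Set E, BOrdBddSet E A → BOrdBddSet G (T '' A)

/-- `T` is `b`-order continuous: `x_α →bo 0` in `E` implies `T x_α →bo 0` in `G`. -/
def BOCont (T : E →ₗ[ℝ] G) : Prop :=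
  ∀ (ι : Type*) [Preorder ι] [Nonempty ι] [IsDirected ι (· ≤ ·)] (x : ι → E),
    BOConv x 0 → BOConv (fun i => T (x i)) 0

end Operators

section BPHelpers

variable {V : Type*} [AddCommGroup V] [Module ℝ V] [Lattice V]
  [CovariantClass V V (· + ·) (· ≤ ·)]

/-- Riesz decomposition property in a lattice-ordered group. -/
lemma bph_riesz {u v w : V} (hu0 : 0 ≤ u) (hv : 0 ≤ v) (hw : 0 ≤ w)
    (huvw : u ≤ v + w) :
    ∃ a b : V, u = a + b ∧ 0 ≤ a ∧ a ≤ v ∧ 0 ≤ b ∧ b ≤ w := by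
  refine ⟨u ⊓ v, u - u ⊓ v, by abel, le_inf hu0 hv, inf_le_right, ?_, ?_⟩
  · exact sub_nonneg.2 inf_le_left
  · have h1 : u ≤ w + u ⊓ v := by
      rw [add_inf]
      exact le_inf (le_add_of_nonneg_left hw) (by rwa [add_comm] at huvw)
    exact sub_le_iff_le_add.2 h1

variable [PosSMulMono ℝ V]

lemma bph_smul_sup {c : ℝ} (hc : 0 < c) (x y : V) :
    c • (x ⊔ y) = (c • x) ⊔ (c • y) := by
  apply le_antisymm
  · have h1 : x ⊔ y ≤ c⁻¹ • ((c • x) ⊔ (c • y)) := by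
      refine sup_le ?_ ?_
      · calc x = c⁻¹ • (c • x) := (inv_smul_smul₀ hc.ne' x).symm
          _ ≤ _ := smul_le_smul_of_nonneg_left le_sup_left (inv_nonneg.2 hc.le)
      · calc y = c⁻¹ • (c • y) := (inv_smul_smul₀ hc.ne' y).symm
          _ ≤ _ := smul_le_smul_of_nonneg_left le_sup_right (inv_nonneg.2 hc.le)
    calc c • (x ⊔ y) ≤ c • (c⁻¹ • ((c • x) ⊔ (c • y))) :=
          smul_le_smul_of_nonneg_left h1 hc.le
      _ = (c • x) ⊔ (c • y) := smul_inv_smul₀ hc.ne' _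
  · exact sup_le (smul_le_smul_of_nonneg_left le_sup_left hc.le)
      (smul_le_smul_of_nonneg_left le_sup_right hc.le)

lemma bph_posPart_smul {c : ℝ} (hc : 0 ≤ c) (x : V) : (c • x)⁺ = c • x⁺ := by
  rcases hc.eq_or_lt with h | h
  · rw [← h]; simp
  · rw [posPart_def, posPart_def, bph_smul_sup h, smul_zero]

lemma bph_negPart_smul {c : ℝ} (hc : 0 ≤ c) (x : V) : (c • x)⁻ = c • x⁻ := by
  have : (-(c • x))⁺ = c • (-x)⁺ := by rw [← smul_neg, bph_posPart_smul hc]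
  rw [← posPart_neg, this, posPart_neg]

lemma bph_isLUB_smul {S : Set V} {s : V} (hs : IsLUB S s) {c : ℝ} (hc : 0 < c) :
    IsLUB ((c • ·) '' S) (c • s) := by
  constructor
  · rintro _ ⟨x, hx, rfl⟩
    exact smul_le_smul_of_nonneg_left (hs.1 hx) hc.le
  · intro b hb
    have h1 : s ≤ c⁻¹ • b := by
      apply hs.2
      intro x hx
      have h2 : c • x ≤ b := hb ⟨x, hx, rfl⟩
      calc x = c⁻¹ • (c • x) := (inv_smul_smul₀ hc.ne' x).symm
        _ ≤ c⁻¹ • b := smul_le_smul_of_nonneg_left h2 (inv_nonneg.2 hc.le)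
    calc c • s ≤ c • (c⁻¹ • b) := smul_le_smul_of_nonneg_left h1 hc.le
      _ = b := smul_inv_smul₀ hc.ne' b

/-- Extension of the "supremum over an order interval" function to a linear map. -/
lemma bph_coneExt {W : Type*} [AddCommGroup W] [Module ℝ W] [Lattice W]
    [CovariantClass W W (· + ·) (· ≤ ·)] [PosSMulMono ℝ W]
    (L : V →ₗ[ℝ] W)
    (hLUB : ∀ v : V, 0 ≤ v → ∃ s, IsLUB (L '' {u | 0 ≤ u ∧ u ≤ v}) s) :
    ∃ P : V →ₗ[ℝ] W, ∀ v : V, 0 ≤ v → IsLUB (L '' {u | 0 ≤ u ∧ u ≤ v}) (P v) := by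
  classical
  have hLUB' : ∀ v : V, ∃ s, 0 ≤ v → IsLUB (L '' {u | 0 ≤ u ∧ u ≤ v}) s := by
    intro v
    by_cases hv : 0 ≤ v
    · exact ⟨(hLUB v hv).choose, fun _ => (hLUB v hv).choose_spec⟩
    · exact ⟨0, fun h => absurd h hv⟩
  choose p hp using hLUB'
  have hadd : ∀ v w : V, 0 ≤ v → 0 ≤ w → p (v + w) = p v + p w := by
    intro v w hv hw
    refine (hp _ (add_nonneg hv hw)).unique ?_
    constructor
    · rintro _ ⟨u, ⟨hu0, huvw⟩, rfl⟩
      obtain ⟨a, b, rfl, ha0, hav, hb0, hbw⟩ := bph_riesz hu0 hv hw huvw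
      rw [map_add]
      exact add_le_add ((hp v hv).1 ⟨a, ⟨ha0, hav⟩, rfl⟩) ((hp w hw).1 ⟨b, ⟨hb0, hbw⟩, rfl⟩)
    · intro b hb
      have h1 : p v ≤ b - p w := by
        apply (hp v hv).2
        rintro _ ⟨u1, ⟨hu10, hu1v⟩, rfl⟩
        have h2 : p w ≤ b - L u1 := by
          apply (hp w hw).2
          rintro _ ⟨u2, ⟨hu20, hu2w⟩, rfl⟩
          rw [le_sub_iff_add_le, add_comm, ← map_add]
          exact hb ⟨u1 + u2, ⟨add_nonneg hu10 hu20, add_le_add hu1v hu2w⟩, rfl⟩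
        rw [le_sub_iff_add_le] at h2 ⊢
        rwa [add_comm]
      exact le_sub_iff_add_le.mp h1
  have hzero : p 0 = 0 := by
    have h := hadd 0 0 le_rfl le_rfl
    rw [add_zero] at h
    have h2 : p 0 + p 0 = p 0 + 0 := by rw [← h, add_zero]
    exact add_left_cancel h2
  have hsmul : ∀ (c : ℝ), 0 < c → ∀ v : V, 0 ≤ v → p (c • v) = c • p v := by
    intro c hc v hv
    refine (hp _ (smul_nonneg hc.le hv)).unique ?_
    have hset : L '' {u | 0 ≤ u ∧ u ≤ c • v} = (c • ·) '' (L '' {u | 0 ≤ u ∧ u ≤ v}) := by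
      rw [Set.image_image]
      ext y
      constructor
      · rintro ⟨u, ⟨hu0, huv⟩, rfl⟩
        refine ⟨c⁻¹ • u, ⟨smul_nonneg (inv_nonneg.2 hc.le) hu0, ?_⟩, ?_⟩
        · have h3 := smul_le_smul_of_nonneg_left huv (inv_nonneg.2 hc.le)
          rwa [inv_smul_smul₀ hc.ne'] at h3
        · show c • L (c⁻¹ • u) = L u
          rw [← map_smul, smul_inv_smul₀ hc.ne']
      · rintro ⟨u, ⟨hu0, huv⟩, rfl⟩
        exact ⟨c • u, ⟨smul_nonneg hc.le hu0, smul_le_smul_of_nonneg_left huv hc.le⟩,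
          map_smul L c u⟩
    rw [hset]
    exact bph_isLUB_smul (hp v hv) hc
  refine ⟨{ toFun := fun x => p x⁺ - p x⁻
            map_add' := ?_
            map_smul' := ?_ }, ?_⟩
  · intro x y
    have e : (x + y)⁺ + (x⁻ + y⁻) = (x + y)⁻ + (x⁺ + y⁺) := by
      have h1 := posPart_sub_negPart (x + y)
      have h2 := posPart_sub_negPart x
      have h3 := posPart_sub_negPart y
      have h4 : (x + y)⁺ - (x + y)⁻ = (x⁺ - x⁻) + (y⁺ - y⁻) := by rw [h1, h2, h3]
      have h5 := sub_eq_iff_eq_add.mp h4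
      rw [h5]; abel
    have e2 := congrArg p e
    rw [hadd _ _ (posPart_nonneg _) (add_nonneg (negPart_nonneg _) (negPart_nonneg _)),
        hadd _ _ (negPart_nonneg _) (add_nonneg (posPart_nonneg _) (posPart_nonneg _)),
        hadd _ _ (negPart_nonneg _) (negPart_nonneg _),
        hadd _ _ (posPart_nonneg _) (posPart_nonneg _)] at e2
    have e3 : p (x + y)⁺ = p (x + y)⁻ + (p x⁺ + p y⁺) - (p x⁻ + p y⁻) := by
      rw [← e2]; abel
    show p (x + y)⁺ - p (x + y)⁻ = (p x⁺ - p x⁻) + (p y⁺ - p y⁻)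
    rw [e3]; abel
  · intro c x
    simp only [RingHom.id_apply]
    show p (c • x)⁺ - p (c • x)⁻ = c • (p x⁺ - p x⁻)
    rcases le_or_gt 0 c with hc | hc
    · rcases hc.eq_or_lt with h | h
      · rw [← h]; simp [hzero]
      · rw [bph_posPart_smul h.le, bph_negPart_smul h.le,
            hsmul c h _ (posPart_nonneg _), hsmul c h _ (negPart_nonneg _), smul_sub]
    · have hc' : 0 < -c := neg_pos.2 hc
      have hx0 : c • x = -((-c) • x) := by rw [neg_smul, neg_neg]
      have hx1 : (c • x)⁺ = (-c) • x⁻ := by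
        rw [hx0, posPart_neg, bph_negPart_smul hc'.le]
      have hx2 : (c • x)⁻ = (-c) • x⁺ := by
        rw [hx0, negPart_neg, bph_posPart_smul hc'.le]
      rw [hx1, hx2, hsmul _ hc' _ (negPart_nonneg _), hsmul _ hc' _ (posPart_nonneg _),
          neg_smul, neg_smul, smul_sub]
      abel
  · intro v hv
    have h1 : v⁺ = v := posPart_eq_self.mpr hv
    have h2 : v⁻ = 0 := negPart_eq_zero.mpr hv
    simp only [LinearMap.coe_mk, AddHom.coe_mk, h1, h2, hzero, sub_zero]
    exact hp v hv

/-- A positive linear map sends order bounded sets to order bounded sets. -/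
lemma bph_image_ordBdd {W : Type*} [AddCommGroup W] [Module ℝ W] [Lattice W]
    [CovariantClass W W (· + ·) (· ≤ ·)]
    (N : V →ₗ[ℝ] W) (hN : ∀ v : V, 0 ≤ v → 0 ≤ N v)
    {S : Set V} (hS : OrdBdd S) : OrdBdd (N '' S) := by
  obtain ⟨a, b, hab⟩ := hS
  refine ⟨N a, N b, ?_⟩
  rintro _ ⟨x, hx, rfl⟩
  have h1 := hN _ (sub_nonneg.2 (hab x hx).1)
  have h2 := hN _ (sub_nonneg.2 (hab x hx).2)
  rw [map_sub] at h1 h2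
  exact ⟨sub_nonneg.1 h1, sub_nonneg.1 h2⟩

end BPHelpers

section BPQE

variable {E : Type*} [AddCommGroup E] [Module ℝ E] [Lattice E]
  [CovariantClass E E (· + ·) (· ≤ ·)]

lemma bph_QE_mono {x y : E} (h : x ≤ y) : QE E x ≤ QE E y := by
  intro f hf
  have h0 := hf (y - x) (sub_nonneg.2 h)
  simp only [ZeroMemClass.coe_zero, LinearMap.zero_apply, map_sub] at h0
  show (f : E →ₗ[ℝ] ℝ) x ≤ (f : E →ₗ[ℝ] ℝ) y
  linarith

end BPQE


set_option maxHeartbeats 1000000 in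
/-- if `F` is `b`-Dedekind complete, then a linear operator `T : E → F` is
order bounded iff it is `b`-order bounded, i.e. `L_b(E,F) = L_{b~}(E,F)`. -/
theorem orderBddOp_iff_bOrdBddOp {E F : Type*}
    [AddCommGroup E] [Module ℝ E] [Lattice E] [CovariantClass E E (· + ·) (· ≤ ·)]
    [PosSMulMono ℝ E]
    [AddCommGroup F] [Module ℝ F] [Lattice F] [CovariantClass F F (· + ·) (· ≤ ·)]
    [PosSMulMono ℝ F]
    (hembF : QLatticeEmbedding F) (hbDC : BDedekindComplete F)
    (T : E →ₗ[ℝ] F) :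
    OrderBddOp T ↔ BOrdBddOp T := by
  constructor
  · -- order bounded → b-order bounded
    intro hT A hA
    rcases Set.eq_empty_or_nonempty A with rfl | ⟨a₀, ha₀⟩
    · exact ⟨0, 0, by simp⟩
    obtain ⟨Φ, Ψ, hΦΨ⟩ := hA
    have hA' : ∀ a ∈ A, ∀ f : ↥(obDual E), 0 ≤ f →
        (Φ : ↥(obDual E) →ₗ[ℝ] ℝ) f ≤ (f : E →ₗ[ℝ] ℝ) a ∧
          (f : E →ₗ[ℝ] ℝ) a ≤ (Ψ : ↥(obDual E) →ₗ[ℝ] ℝ) f := by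
      intro a ha f hf
      obtain ⟨h1, h2⟩ := hΦΨ (QE E a) ⟨a, ha, rfl⟩
      exact ⟨h1 f hf, h2 f hf⟩
    have hD : ∀ e : ↥(obDual E), 0 ≤ e →
        (Φ : ↥(obDual E) →ₗ[ℝ] ℝ) e ≤ (Ψ : ↥(obDual E) →ₗ[ℝ] ℝ) e := fun e he =>
      le_trans (hA' a₀ ha₀ e he).1 (hA' a₀ ha₀ e he).2
    -- construct the domination operators M (for T) and M₂ (for -T)
    have hlub : ∀ (L : E →ₗ[ℝ] F), (∀ S : Set E, OrdBdd S → OrdBdd (L '' S)) →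
        ∀ v : E, 0 ≤ v → ∃ s, IsLUB (L '' {u | 0 ≤ u ∧ u ≤ v}) s := by
      intro L hL v hv
      have hSne : (L '' {u | 0 ≤ u ∧ u ≤ v}).Nonempty := ⟨L 0, 0, ⟨le_rfl, hv⟩, rfl⟩
      obtain ⟨c, d, hcd⟩ := hL {u | 0 ≤ u ∧ u ≤ v} ⟨0, v, fun x hx => hx⟩
      exact hbDC _ hSne ⟨QE F d, fun y hy => bph_QE_mono (hcd y hy).2⟩
    have hT' : ∀ S : Set E, OrdBdd S → OrdBdd ((-T : E →ₗ[ℝ] F) '' S) := by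
      intro S hS
      obtain ⟨c, d, hcd⟩ := hT S hS
      refine ⟨-d, -c, ?_⟩
      rintro _ ⟨x, hx, rfl⟩
      obtain ⟨h1, h2⟩ := hcd (T x) ⟨x, hx, rfl⟩
      simp only [LinearMap.neg_apply]
      constructor
      · exact sub_nonneg.1 (by rw [sub_neg_eq_add, neg_add_eq_sub]; exact sub_nonneg.2 h2)
      · exact sub_nonneg.1 (by rw [neg_sub_neg]; exact sub_nonneg.2 h1)
    obtain ⟨M, hM⟩ := bph_coneExt T (hlub T hT)
    obtain ⟨M₂, hM₂⟩ := bph_coneExt (-T : E →ₗ[ℝ] F) (hlub _ hT')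
    have hM_pos : ∀ v : E, 0 ≤ v → 0 ≤ M v := by
      intro v hv
      have h := (hM v hv).1 ⟨0, ⟨le_rfl, hv⟩, rfl⟩
      rwa [map_zero] at h
    have hM₂_pos : ∀ v : E, 0 ≤ v → 0 ≤ M₂ v := by
      intro v hv
      have h := (hM₂ v hv).1 ⟨0, ⟨le_rfl, hv⟩, rfl⟩
      rwa [map_zero] at h
    have hTleM : ∀ {u v : E}, 0 ≤ u → u ≤ v → T u ≤ M v := by
      intro u v hu huv
      exact (hM v (hu.trans huv)).1 ⟨u, ⟨hu, huv⟩, rfl⟩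
    have hTleM₂ : ∀ {u v : E}, 0 ≤ u → u ≤ v → -(T u) ≤ M₂ v := by
      intro u v hu huv
      have h := (hM₂ v (hu.trans huv)).1 ⟨u, ⟨hu, huv⟩, rfl⟩
      rwa [LinearMap.neg_apply] at h
    -- the composition maps into obDual E
    have memT : ∀ g : ↥(obDual F), (g : F →ₗ[ℝ] ℝ).comp T ∈ obDual E := by
      intro g S hS
      show OrdBdd _
      rw [LinearMap.coe_comp, Set.image_comp]
      exact g.2 _ (hT S hS)
    have memM : ∀ g : ↥(obDual F), (g : F →ₗ[ℝ] ℝ).comp M ∈ obDual E := by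
      intro g S hS
      show OrdBdd _
      rw [LinearMap.coe_comp, Set.image_comp]
      exact g.2 _ (bph_image_ordBdd M hM_pos hS)
    have memM₂ : ∀ g : ↥(obDual F), (g : F →ₗ[ℝ] ℝ).comp M₂ ∈ obDual E := by
      intro g S hS
      show OrdBdd _
      rw [LinearMap.coe_comp, Set.image_comp]
      exact g.2 _ (bph_image_ordBdd M₂ hM₂_pos hS)
    let cT : ↥(obDual F) →ₗ[ℝ] ↥(obDual E) :=
      { toFun := fun g => ⟨(g : F →ₗ[ℝ] ℝ).comp T, memT g⟩
        map_add' := fun g₁ g₂ => Subtype.ext (LinearMap.ext fun v => by simp)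
        map_smul' := fun c g => Subtype.ext (LinearMap.ext fun v => by simp) }
    let cM : ↥(obDual F) →ₗ[ℝ] ↥(obDual E) :=
      { toFun := fun g => ⟨(g : F →ₗ[ℝ] ℝ).comp M, memM g⟩
        map_add' := fun g₁ g₂ => Subtype.ext (LinearMap.ext fun v => by simp)
        map_smul' := fun c g => Subtype.ext (LinearMap.ext fun v => by simp) }
    let cM₂ : ↥(obDual F) →ₗ[ℝ] ↥(obDual E) :=
      { toFun := fun g => ⟨(g : F →ₗ[ℝ] ℝ).comp M₂, memM₂ g⟩
        map_add' := fun g₁ g₂ => Subtype.ext (LinearMap.ext fun v => by simp)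
        map_smul' := fun c g => Subtype.ext (LinearMap.ext fun v => by simp) }
    -- order boundedness of the composition maps
    have hMimg : ∀ S : Set ↥(obDual F), OrdBdd S → OrdBdd (cM '' S) := by
      rintro S ⟨α, β, hαβ⟩
      refine ⟨cM α, cM β, ?_⟩
      rintro _ ⟨g, hg, rfl⟩
      constructor
      · intro v hv
        exact (hαβ g hg).1 (M v) (hM_pos v hv)
      · intro v hv
        exact (hαβ g hg).2 (M v) (hM_pos v hv)
    have hM₂img : ∀ S : Set ↥(obDual F), OrdBdd S → OrdBdd (cM₂ '' S) := by
      rintro S ⟨α, β, hαβ⟩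
      refine ⟨cM₂ α, cM₂ β, ?_⟩
      rintro _ ⟨g, hg, rfl⟩
      constructor
      · intro v hv
        exact (hαβ g hg).1 (M₂ v) (hM₂_pos v hv)
      · intro v hv
        exact (hαβ g hg).2 (M₂ v) (hM₂_pos v hv)
    have hTimg : ∀ S : Set ↥(obDual F), OrdBdd S → OrdBdd (cT '' S) := by
      rintro S ⟨α, β, hαβ⟩
      refine ⟨cT α - cM₂ (β - α), cT α + cM (β - α), ?_⟩
      rintro _ ⟨g, hg, rfl⟩
      have hga : ∀ w : F, 0 ≤ w → (α : F →ₗ[ℝ] ℝ) w ≤ (g : F →ₗ[ℝ] ℝ) w := (hαβ g hg).1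
      have hgb : ∀ w : F, 0 ≤ w → (g : F →ₗ[ℝ] ℝ) w ≤ (β : F →ₗ[ℝ] ℝ) w := (hαβ g hg).2
      constructor
      · intro v hv
        have hw : (0:F) ≤ M₂ v + T v := by
          have h3 := sub_nonneg.2 (hTleM₂ hv le_rfl)
          rwa [sub_neg_eq_add] at h3
        have k1 := hga _ hw
        have k2 := hgb _ (hM₂_pos v hv)
        rw [map_add, map_add] at k1
        show (↑(cT α - cM₂ (β - α)) : E →ₗ[ℝ] ℝ) v ≤ (g : F →ₗ[ℝ] ℝ) (T v)
        have he : (↑(cT α - cM₂ (β - α)) : E →ₗ[ℝ] ℝ) v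
            = (α : F →ₗ[ℝ] ℝ) (T v)
              - ((β : F →ₗ[ℝ] ℝ) (M₂ v) - (α : F →ₗ[ℝ] ℝ) (M₂ v)) := by
          simp [cT, cM₂]
        rw [he]
        linarith
      · intro v hv
        have hw : (0:F) ≤ M v - T v := sub_nonneg.2 (hTleM hv le_rfl)
        have k1 := hga _ hw
        have k2 := hgb _ (hM_pos v hv)
        rw [map_sub, map_sub] at k1
        show (g : F →ₗ[ℝ] ℝ) (T v) ≤ (↑(cT α + cM (β - α)) : E →ₗ[ℝ] ℝ) v
        have he : (↑(cT α + cM (β - α)) : E →ₗ[ℝ] ℝ) v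
            = (α : F →ₗ[ℝ] ℝ) (T v)
              + ((β : F →ₗ[ℝ] ℝ) (M v) - (α : F →ₗ[ℝ] ℝ) (M v)) := by
          simp [cT, cM]
        rw [he]
        linarith
    have memA : ∀ (Θ : Bidual E) (c : ↥(obDual F) →ₗ[ℝ] ↥(obDual E)),
        (∀ S : Set ↥(obDual F), OrdBdd S → OrdBdd (c '' S)) →
        (Θ : ↥(obDual E) →ₗ[ℝ] ℝ).comp c ∈ obDual ↥(obDual F) := by
      intro Θ c hc S hS
      show OrdBdd _
      rw [LinearMap.coe_comp, Set.image_comp]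
      exact Θ.2 _ (hc S hS)
    set ΦL := (Φ : ↥(obDual E) →ₗ[ℝ] ℝ) with hΦL
    set ΨL := (Ψ : ↥(obDual E) →ₗ[ℝ] ℝ) with hΨL
    let Psi' : Bidual F :=
      ⟨ΨL.comp cM - ΦL.comp cM + ΦL.comp cT,
        add_mem (sub_mem (memA Ψ cM hMimg) (memA Φ cM hMimg)) (memA Φ cT hTimg)⟩
    let Phi' : Bidual F :=
      ⟨ΦL.comp cT - ΨL.comp cM₂ + ΦL.comp cM₂,
        add_mem (sub_mem (memA Φ cT hTimg) (memA Ψ cM₂ hM₂img)) (memA Φ cM₂ hM₂img)⟩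
    refine ⟨Phi', Psi', ?_⟩
    rintro _ ⟨_, ⟨a, ha, rfl⟩, rfl⟩
    -- first build the positive part of h ∘ T for each positive h
    have key : ∀ h : ↥(obDual F), 0 ≤ h →
        (Phi' : ↥(obDual F) →ₗ[ℝ] ℝ) h ≤ (h : F →ₗ[ℝ] ℝ) (T a) ∧
        (h : F →ₗ[ℝ] ℝ) (T a) ≤ (Psi' : ↥(obDual F) →ₗ[ℝ] ℝ) h := by
      intro h hh
      have hhpos : ∀ w : F, 0 ≤ w → 0 ≤ (h : F →ₗ[ℝ] ℝ) w := by
        intro w hw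
        have := hh w hw
        simpa using this
      have hhmono : ∀ {w₁ w₂ : F}, w₁ ≤ w₂ → (h : F →ₗ[ℝ] ℝ) w₁ ≤ (h : F →ₗ[ℝ] ℝ) w₂ := by
        intro w₁ w₂ hw
        have := hhpos _ (sub_nonneg.2 hw)
        rw [map_sub] at this
        linarith
      set f : ↥(obDual E) := cT h with hfdef
      have hfLUB : ∀ v : E, 0 ≤ v →
          ∃ s, IsLUB ((f : E →ₗ[ℝ] ℝ) '' {u | 0 ≤ u ∧ u ≤ v}) s := by
        intro v hv
        have hne : ((f : E →ₗ[ℝ] ℝ) '' {u | 0 ≤ u ∧ u ≤ v}).Nonempty :=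
          ⟨_, 0, ⟨le_rfl, hv⟩, rfl⟩
        obtain ⟨c1, c2, hc⟩ := f.2 {u | 0 ≤ u ∧ u ≤ v} ⟨0, v, fun x hx => hx⟩
        exact ⟨sSup _, isLUB_csSup hne ⟨c2, fun y hy => (hc y hy).2⟩⟩
      obtain ⟨Pf, hPf⟩ := bph_coneExt (f : E →ₗ[ℝ] ℝ) hfLUB
      have hPf_pos : ∀ v : E, 0 ≤ v → 0 ≤ Pf v := by
        intro v hv
        have hmem := (hPf v hv).1 ⟨0, ⟨le_rfl, hv⟩, rfl⟩
        rwa [map_zero] at hmem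
      have memPf : Pf ∈ obDual E := fun S hS => bph_image_ordBdd Pf hPf_pos hS
      set fp : ↥(obDual E) := ⟨Pf, memPf⟩ with hfp
      set fm : ↥(obDual E) := fp - f with hfm
      have hfp_pos : (0 : ↥(obDual E)) ≤ fp := by
        intro v hv
        simpa using hPf_pos v hv
      have hfle : ∀ v : E, 0 ≤ v → (f : E →ₗ[ℝ] ℝ) v ≤ Pf v := by
        intro v hv
        exact (hPf v hv).1 ⟨v, ⟨hv, le_rfl⟩, rfl⟩
      have hfm_pos : (0 : ↥(obDual E)) ≤ fm := by
        intro v hv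
        simp only [hfm, ZeroMemClass.coe_zero, LinearMap.zero_apply,
          AddSubgroupClass.coe_sub, LinearMap.sub_apply]
        have := hfle v hv
        show (0:ℝ) ≤ (fp : E →ₗ[ℝ] ℝ) v - (f : E →ₗ[ℝ] ℝ) v
        have hfpv : (fp : E →ₗ[ℝ] ℝ) v = Pf v := rfl
        linarith [hfpv]
      have h1 : ∀ v : E, 0 ≤ v → Pf v ≤ (h : F →ₗ[ℝ] ℝ) (M v) := by
        intro v hv
        apply (hPf v hv).2
        rintro _ ⟨u, ⟨hu0, huv⟩, rfl⟩
        exact hhmono (hTleM hu0 huv)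
      have h2 : ∀ v : E, 0 ≤ v → Pf v - (f : E →ₗ[ℝ] ℝ) v ≤ (h : F →ₗ[ℝ] ℝ) (M₂ v) := by
        intro v hv
        rw [sub_le_iff_le_add]
        apply (hPf v hv).2
        rintro _ ⟨u, ⟨hu0, huv⟩, rfl⟩
        have hw : T u - T v ≤ M₂ v := by
          have h3 : -(T (v - u)) ≤ M₂ v := hTleM₂ (sub_nonneg.2 huv) (sub_le_self v hu0)
          rwa [map_sub, neg_sub] at h3
        have h4 : (h : F →ₗ[ℝ] ℝ) (T u - T v) ≤ (h : F →ₗ[ℝ] ℝ) (M₂ v) := hhmono hw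
        rw [map_sub] at h4
        show (h : F →ₗ[ℝ] ℝ) (T u) ≤ (h : F →ₗ[ℝ] ℝ) (M₂ v) + (f : E →ₗ[ℝ] ℝ) v
        have hfv : (f : E →ₗ[ℝ] ℝ) v = (h : F →ₗ[ℝ] ℝ) (T v) := rfl
        linarith
      -- cone positivity of cM h - fp and cM₂ h - fm
      have he1 : (0 : ↥(obDual E)) ≤ cM h - fp := by
        intro v hv
        simp only [ZeroMemClass.coe_zero, LinearMap.zero_apply,
          AddSubgroupClass.coe_sub, LinearMap.sub_apply]
        have := h1 v hv
        show (0:ℝ) ≤ (↑(cM h) : E →ₗ[ℝ] ℝ) v - (fp : E →ₗ[ℝ] ℝ) v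
        have e1 : (↑(cM h) : E →ₗ[ℝ] ℝ) v = (h : F →ₗ[ℝ] ℝ) (M v) := rfl
        have e2 : (fp : E →ₗ[ℝ] ℝ) v = Pf v := rfl
        linarith
      have he2 : (0 : ↥(obDual E)) ≤ cM₂ h - fm := by
        intro v hv
        simp only [ZeroMemClass.coe_zero, LinearMap.zero_apply,
          AddSubgroupClass.coe_sub, LinearMap.sub_apply]
        have := h2 v hv
        show (0:ℝ) ≤ (↑(cM₂ h) : E →ₗ[ℝ] ℝ) v - (fm : E →ₗ[ℝ] ℝ) v
        have e1 : (↑(cM₂ h) : E →ₗ[ℝ] ℝ) v = (h : F →ₗ[ℝ] ℝ) (M₂ v) := rfl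
        have e2 : (fm : E →ₗ[ℝ] ℝ) v = Pf v - (f : E →ₗ[ℝ] ℝ) v := rfl
        linarith
      have hd1 := hD _ he1
      have hd2 := hD _ he2
      have ed1a : ΦL (cM h - fp) = ΦL (cM h) - ΦL fp := map_sub ΦL (cM h) fp
      have ed1b : ΨL (cM h - fp) = ΨL (cM h) - ΨL fp := map_sub ΨL (cM h) fp
      have ed2a : ΦL (cM₂ h - fm) = ΦL (cM₂ h) - ΦL fm := map_sub ΦL (cM₂ h) fm
      have ed2b : ΨL (cM₂ h - fm) = ΨL (cM₂ h) - ΨL fm := map_sub ΨL (cM₂ h) fm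
      have B1 := hA' a ha fp hfp_pos
      have B2 := hA' a ha fm hfm_pos
      have hfa : (f : E →ₗ[ℝ] ℝ) a = (fp : E →ₗ[ℝ] ℝ) a - (fm : E →ₗ[ℝ] ℝ) a := by
        have : (fm : E →ₗ[ℝ] ℝ) a = (fp : E →ₗ[ℝ] ℝ) a - (f : E →ₗ[ℝ] ℝ) a := rfl
        linarith
      have hΦf : ΦL f = ΦL fp - ΦL fm := by
        have hfpfm : fp - fm = f := by rw [hfm]; exact sub_sub_cancel fp f
        rw [← hfpfm, map_sub ΦL fp fm]
      have hPsi'h : (Psi' : ↥(obDual F) →ₗ[ℝ] ℝ) h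
          = ΨL (cM h) - ΦL (cM h) + ΦL f := rfl
      have hPhi'h : (Phi' : ↥(obDual F) →ₗ[ℝ] ℝ) h
          = ΦL f - ΨL (cM₂ h) + ΦL (cM₂ h) := rfl
      have hhTa : (h : F →ₗ[ℝ] ℝ) (T a) = (f : E →ₗ[ℝ] ℝ) a := rfl
      constructor
      · rw [hPhi'h, hhTa]
        linarith [B1.1, B2.2, hd2, ed2a, ed2b, hΦf, hfa]
      · rw [hPsi'h, hhTa]
        linarith [B1.2, B2.1, hd1, ed1a, ed1b, hΦf, hfa]
    constructor
    · intro h hh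
      exact (key h hh).1
    · intro h hh
      exact (key h hh).2
  · -- b-order bounded → order bounded
    intro hT A hA
    obtain ⟨a, b, hab⟩ := hA
    rcases Set.eq_empty_or_nonempty A with rfl | hne
    · exact ⟨0, 0, by simp⟩
    have hbdd : BOrdBddSet E A := by
      refine ⟨QE E a, QE E b, ?_⟩
      rintro _ ⟨x, hx, rfl⟩
      exact ⟨bph_QE_mono (hab x hx).1, bph_QE_mono (hab x hx).2⟩
    obtain ⟨Φ', Ψ', hΦΨ⟩ := hT A hbdd
    have hub : ∃ φ : Bidual F, ∀ y ∈ T '' A, QE F y ≤ φ := by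
      refine ⟨Ψ', ?_⟩
      rintro _ ⟨x, hx, rfl⟩
      exact (hΦΨ _ ⟨T x, ⟨x, hx, rfl⟩, rfl⟩).2
    obtain ⟨s, hs⟩ := hbDC (T '' A) (hne.image T) hub
    have hub2 : ∃ φ : Bidual F, ∀ y ∈ (fun z : F => -z) '' (T '' A), QE F y ≤ φ := by
      refine ⟨-Ψ' + (Ψ' + (-Φ')), ?_⟩
      rintro _ ⟨_, ⟨x, hx, rfl⟩, rfl⟩
      intro g hg
      have h1 : (Φ' : ↥(obDual F) →ₗ[ℝ] ℝ) g ≤ (g : F →ₗ[ℝ] ℝ) (T x) :=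
        (hΦΨ _ ⟨T x, ⟨x, hx, rfl⟩, rfl⟩).1 g hg
      show (g : F →ₗ[ℝ] ℝ) (-(T x)) ≤ _
      rw [map_neg]
      have he : ((↑(-Ψ' + (Ψ' + (-Φ'))) : ↥(obDual F) →ₗ[ℝ] ℝ)) g
          = -((Φ' : ↥(obDual F) →ₗ[ℝ] ℝ) g) := by
        simp
      rw [he]
      linarith
    obtain ⟨s', hs'⟩ := hbDC _ ((hne.image T).image _) hub2
    refine ⟨-s', s, ?_⟩
    rintro _ ⟨x, hx, rfl⟩
    refine ⟨?_, hs.1 ⟨x, hx, rfl⟩⟩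
    have h2 : -(T x) ≤ s' := hs'.1 ⟨T x, ⟨x, hx, rfl⟩, rfl⟩
    have h3 := sub_nonneg.2 h2
    rw [sub_neg_eq_add] at h3
    exact sub_nonneg.1 (by rwa [sub_neg_eq_add, add_comm])
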